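/- For α > 2 and each fixed m ≥ 2, W_m(z) = O((z - m + 1)^{-α+1}) as z ↓ m - 1; i.e., there exist constants C > 0 and δ > 0 such that W_m(z) ≤ C (z - m + 1)^{1-α} for all z ∈ (m-1, m-1+δ). -/

import Mathlib

open MeasureTheory Real

def Dset (k : ℕ) (z : ℝ) : Set (Fin k → ℝ) :=
  {t | (∀ j, t j < 1) ∧ z < ∑ j, t j}

noncomputable def W (α : ℝ) : ℕ → ℝ → ℝ
  | 0, _ => 1
  | (k + 1), z => α ^ (k + 1) * ∫ t in Dset (k + 1) z, (∏ j, t j) ^ (-α - 1)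

private lemma weier {ι : Type*} (s : Finset ι) (f : ι → ℝ)
    (h0 : ∀ i ∈ s, 0 ≤ f i) (h1 : ∀ i ∈ s, f i ≤ 1) :
    1 - ∑ i ∈ s, (1 - f i) ≤ ∏ i ∈ s, f i := by
  induction s using Finset.cons_induction with
  | empty => simp
  | cons a s ha ih =>
    rw [Finset.sum_cons, Finset.prod_cons]
    have h0a := h0 a (Finset.mem_cons_self a s)
    have h1a := h1 a (Finset.mem_cons_self a s)
    have h0' : ∀ i ∈ s, 0 ≤ f i := fun i hi => h0 i (Finset.mem_cons_of_mem hi)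
    have h1' : ∀ i ∈ s, f i ≤ 1 := fun i hi => h1 i (Finset.mem_cons_of_mem hi)
    have hp1 : ∏ i ∈ s, f i ≤ 1 := Finset.prod_le_one h0' h1'
    have hih := ih h0' h1'
    nlinarith [mul_nonneg (sub_nonneg.2 h1a) (sub_nonneg.2 hp1)]

private lemma factor_bound {β γ a b : ℝ} (hβ : 0 < β) (hβγ : β ≤ γ)
    (ha : 0 < a) (ha1 : a ≤ 1) (hb : 0 < b) (hb1 : b ≤ 1) (hab : 1 ≤ a + b) :
    (a * b) ^ (-β) ≤ 2 ^ γ * (a ^ (-γ) + b ^ (-γ)) := by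
  have key : ∀ x y : ℝ, 0 < x → x ≤ 1 → 0 < y → y ≤ 1 → 1/2 ≤ y →
      (x * y) ^ (-β) ≤ 2 ^ γ * (x ^ (-γ) + y ^ (-γ)) := by
    intro x y hx hx1 hy hy1 hy2
    have h1 : (x * y) ^ (-β) ≤ (x * (1/2)) ^ (-β) :=
      Real.rpow_le_rpow_of_nonpos (by positivity) (by nlinarith) (by linarith)
    have h2 : (x * (1/2)) ^ (-β) = x ^ (-β) * ((1:ℝ)/2) ^ (-β) :=
      Real.mul_rpow hx.le (by norm_num)
    have h3 : ((1:ℝ)/2) ^ (-β) = 2 ^ β := by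
      rw [one_div, Real.inv_rpow (by norm_num), Real.rpow_neg (by norm_num), inv_inv]
    have h4 : x ^ (-β) ≤ x ^ (-γ) := Real.rpow_le_rpow_of_exponent_ge hx hx1 (by linarith)
    have h5 : (2:ℝ) ^ β ≤ 2 ^ γ := Real.rpow_le_rpow_of_exponent_le one_le_two hβγ
    have h6 : 0 ≤ y ^ (-γ) := Real.rpow_nonneg hy.le _
    have h7 : 0 ≤ x ^ (-β) := Real.rpow_nonneg hx.le _
    have h8 : 0 ≤ (2:ℝ) ^ γ := Real.rpow_nonneg (by norm_num) _
    calc (x * y) ^ (-β) ≤ x ^ (-β) * 2 ^ β := by rw [← h3, ← h2]; exact h1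
      _ ≤ x ^ (-γ) * 2 ^ γ :=
          mul_le_mul h4 h5 (Real.rpow_nonneg (by norm_num) _) (Real.rpow_nonneg hx.le _)
      _ ≤ 2 ^ γ * (x ^ (-γ) + y ^ (-γ)) := by nlinarith [mul_nonneg h8 h6]
  rcases le_total a b with h | h
  · exact key a b ha ha1 hb hb1 (by linarith)
  · have hk := key b a hb hb1 ha ha1 (by linarith)
    calc (a * b) ^ (-β) = (b * a) ^ (-β) := by rw [mul_comm]
      _ ≤ 2 ^ γ * (b ^ (-γ) + a ^ (-γ)) := hk
      _ = 2 ^ γ * (a ^ (-γ) + b ^ (-γ)) := by ring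

theorem stmt7 (α : ℝ) (hα : 2 < α) (m : ℕ) (hm : 2 ≤ m) :
    ∃ C > (0 : ℝ), ∃ δ > (0 : ℝ),
      ∀ z ∈ Set.Ioo ((m : ℝ) - 1) ((m : ℝ) - 1 + δ),
        W α m z ≤ C * (z - (m : ℝ) + 1) ^ (1 - α) := by
  obtain ⟨k, rfl⟩ : ∃ k, m = k + 1 := ⟨m - 1, by omega⟩
  set n : ℕ := k + 1 with hn
  have hn2 : (2:ℝ) ≤ (n:ℝ) := by exact_mod_cast hm
  have hnpos : (0:ℝ) < (n:ℝ) := by linarith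
  set γ : ℝ := (α + n - 1) / n with hγdef
  set β : ℝ := (α + 1) / n with hβdef
  have hγ1 : 1 < γ := by rw [hγdef, lt_div_iff₀ hnpos]; linarith
  have hβpos : 0 < β := by rw [hβdef]; positivity
  have hβγ : β ≤ γ := by
    rw [hβdef, hγdef]
    exact (div_le_div_iff_of_pos_right hnpos).2 (by linarith)
  set K : ℝ := 2 ^ (γ + 1) / (γ - 1) with hKdef
  have hKpos : 0 < K := div_pos (Real.rpow_pos_of_pos two_pos _) (by linarith)
  have hαpos : (0:ℝ) < α := by linarith
  refine ⟨α ^ n * K ^ n, mul_pos (pow_pos hαpos n) (pow_pos hKpos n), 1, one_pos, ?_⟩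
  rintro z ⟨hz1, hz2⟩
  set c : ℝ := z - (n:ℝ) + 1 with hcdef
  have hc0 : 0 < c := by rw [hcdef]; linarith
  have hc1 : c < 1 := by rw [hcdef]; linarith
  -- the two single-variable pieces
  have cont1 : ContinuousOn (fun t : ℝ => t ^ (-γ)) (Set.Icc c 1) := fun t ht =>
    (Real.continuousAt_rpow_const t (-γ)
      (Or.inl (ne_of_gt (lt_of_lt_of_le hc0 ht.1)))).continuousWithinAt
  have cont2 : ContinuousOn (fun t : ℝ => (c + 1 - t) ^ (-γ)) (Set.Icc c 1) := by
    intro t ht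
    have h1 : (0:ℝ) < c + 1 - t := by have := ht.2; linarith
    exact (ContinuousAt.comp
      (Real.continuousAt_rpow_const _ (-γ) (Or.inl (ne_of_gt h1)))
      ((continuous_const.sub continuous_id).continuousAt)).continuousWithinAt
  have hint1 : IntegrableOn (fun t : ℝ => t ^ (-γ)) (Set.Ioo c 1) :=
    cont1.integrableOn_Icc.mono_set Set.Ioo_subset_Icc_self
  have hint2 : IntegrableOn (fun t : ℝ => (c + 1 - t) ^ (-γ)) (Set.Ioo c 1) :=
    cont2.integrableOn_Icc.mono_set Set.Ioo_subset_Icc_self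
  set H : ℝ → ℝ := fun t => 2 ^ γ * (t ^ (-γ) + (c + 1 - t) ^ (-γ)) with hHdef
  have hHint : IntegrableOn H (Set.Ioo c 1) := ((hint1.add hint2).const_mul _)
  have hmeasIoo : MeasurableSet (Set.Ioo c 1) := measurableSet_Ioo
  set F : ℝ → ℝ := (Set.Ioo c 1).indicator H with hFdef
  have hFint : Integrable F := (integrable_indicator_iff hmeasIoo).2 hHint
  have hHnn : ∀ t ∈ Set.Ioo c 1, 0 ≤ H t := fun t ht =>
    mul_nonneg (Real.rpow_nonneg (by norm_num) _)
      (add_nonneg (Real.rpow_nonneg (le_of_lt (hc0.trans ht.1)) _)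
        (Real.rpow_nonneg (by have := ht.2; linarith) _))
  have hFnn : ∀ t, 0 ≤ F t := fun t => Set.indicator_nonneg hHnn t
  have hGint : Integrable (fun t : Fin n → ℝ => ∏ j, F (t j)) :=
    Integrable.fintype_prod (𝕜 := ℝ) (fun _ => hFint)
  have hGeq : ∫ t : Fin n → ℝ, ∏ j, F (t j) = (∫ x, F x) ^ n := by
    rw [MeasureTheory.integral_fintype_prod_volume_eq_pow (ι := Fin n) F, Fintype.card_fin]
  have hD : MeasurableSet (Dset n z) := by
    have : Dset n z = (⋂ j, {t : Fin n → ℝ | t j < 1}) ∩ {t : Fin n → ℝ | z < ∑ j, t j} := by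
      ext t; simp [Dset, Set.mem_iInter]
    rw [this]
    exact (MeasurableSet.iInter fun j =>
        measurableSet_lt (measurable_pi_apply j) measurable_const).inter
      (measurableSet_lt measurable_const (Finset.measurable_sum _ fun i _ => measurable_pi_apply i))
  -- pointwise facts
  have hcast : ((k:ℝ)) = (n:ℝ) - 1 := by rw [hn]; push_cast; ring
  have hlow : ∀ t, t ∈ Dset n z → ∀ j, c < t j := by
    rintro t ⟨ht1, htz⟩ j
    have hsum : ∑ i ∈ Finset.univ.erase j, t i ≤ (k:ℝ) := by
      calc ∑ i ∈ Finset.univ.erase j, t i ≤ ∑ _i ∈ Finset.univ.erase j, (1:ℝ) :=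
            Finset.sum_le_sum fun i _ => (ht1 i).le
        _ = ((Finset.univ.erase j).card : ℝ) := by simp
        _ = (k:ℝ) := by
            rw [Finset.card_erase_of_mem (Finset.mem_univ j), Finset.card_univ, Fintype.card_fin]
            simp [hn]
    have hsplit : t j + ∑ i ∈ Finset.univ.erase j, t i = ∑ i, t i :=
      Finset.add_sum_erase _ _ (Finset.mem_univ j)
    have : c = z - (k:ℝ) := by rw [hcdef, hcast]; ring
    rw [this]; linarith
  have hfac : ∀ t, t ∈ Dset n z → ∀ j, t j * (c + 1 - t j) ≤ ∏ i, t i := by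
    rintro t ht j
    obtain ⟨ht1, htz⟩ := ht
    have hpos : ∀ i, 0 < t i := fun i => hc0.trans (hlow t ⟨ht1, htz⟩ i)
    have hsplit : t j * ∏ i ∈ Finset.univ.erase j, t i = ∏ i, t i :=
      Finset.mul_prod_erase _ _ (Finset.mem_univ j)
    have hW := weier (Finset.univ.erase j) t (fun i _ => (hpos i).le) (fun i _ => (ht1 i).le)
    have hsum_erase : ∑ i ∈ Finset.univ.erase j, (1 - t i)
        = (k:ℝ) - ∑ i ∈ Finset.univ.erase j, t i := by
      rw [Finset.sum_sub_distrib]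
      congr 1
      rw [Finset.sum_const, Finset.card_erase_of_mem (Finset.mem_univ j), Finset.card_univ,
        Fintype.card_fin]
      simp [hn]
    have hsplit2 : t j + ∑ i ∈ Finset.univ.erase j, t i = ∑ i, t i :=
      Finset.add_sum_erase _ _ (Finset.mem_univ j)
    have h2 : c + 1 - t j ≤ ∏ i ∈ Finset.univ.erase j, t i := by
      have hc' : c = z - (k:ℝ) := by rw [hcdef, hcast]; ring
      rw [hc']
      rw [hsum_erase] at hW
      linarith
    calc t j * (c + 1 - t j) ≤ t j * ∏ i ∈ Finset.univ.erase j, t i :=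
          mul_le_mul_of_nonneg_left h2 (hpos j).le
      _ = ∏ i, t i := hsplit
  have hgle : ∀ t ∈ Dset n z, (∏ j, t j) ^ (-α - 1) ≤ ∏ j, F (t j) := by
    intro t ht
    have hpos : ∀ i, 0 < t i := fun i => hc0.trans (hlow t ht i)
    have hprodpos : 0 < ∏ i, t i := Finset.prod_pos fun i _ => hpos i
    have hmem : ∀ j, t j ∈ Set.Ioo c 1 := fun j => ⟨hlow t ht j, ht.1 j⟩
    have hbpos : ∀ j, 0 < c + 1 - t j := fun j => by have := (hmem j).2; linarith
    have hfacnn : ∀ j : Fin n, (0:ℝ) ≤ t j * (c + 1 - t j) := fun j =>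
      mul_nonneg (hpos j).le (hbpos j).le
    have hA : ∏ j : Fin n, (t j * (c + 1 - t j)) ≤ (∏ i, t i) ^ (n:ℕ) := by
      have hconst : (∏ i, t i) ^ (n:ℕ) = ∏ _j : Fin n, (∏ i, t i) := by
        rw [Finset.prod_const, Finset.card_univ, Fintype.card_fin]
      rw [hconst]
      exact Finset.prod_le_prod (fun j _ => hfacnn j) (fun j _ => hfac t ht j)
    have hB : (∏ j, t j) ^ (-α - 1) = ((∏ j, t j) ^ (n:ℕ)) ^ (-β) := by
      rw [← Real.rpow_natCast (∏ j, t j) n, ← Real.rpow_mul hprodpos.le]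
      congr 1
      rw [hβdef]
      field_simp
      ring
    have hppos : 0 < ∏ j : Fin n, (t j * (c + 1 - t j)) :=
      Finset.prod_pos fun j _ => mul_pos (hpos j) (hbpos j)
    have hC : ((∏ j, t j) ^ (n:ℕ)) ^ (-β) ≤ (∏ j : Fin n, (t j * (c + 1 - t j))) ^ (-β) :=
      Real.rpow_le_rpow_of_nonpos hppos hA (neg_nonpos.2 hβpos.le)
    have hD2 : (∏ j : Fin n, (t j * (c + 1 - t j))) ^ (-β)
        = ∏ j : Fin n, (t j * (c + 1 - t j)) ^ (-β) :=
      (Real.finset_prod_rpow _ _ (fun j _ => hfacnn j) _).symm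
    have hE : ∀ j : Fin n, (t j * (c + 1 - t j)) ^ (-β) ≤ F (t j) := by
      intro j
      rw [hFdef, Set.indicator_of_mem (hmem j)]
      exact factor_bound hβpos hβγ (hpos j) (hmem j).2.le (hbpos j)
        (by have := (hmem j).1; linarith) (by linarith [hc0])
    calc (∏ j, t j) ^ (-α - 1) = ((∏ j, t j) ^ (n:ℕ)) ^ (-β) := hB
      _ ≤ (∏ j : Fin n, (t j * (c + 1 - t j))) ^ (-β) := hC
      _ = ∏ j : Fin n, (t j * (c + 1 - t j)) ^ (-β) := hD2
      _ ≤ ∏ j, F (t j) :=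
          Finset.prod_le_prod (fun j _ => Real.rpow_nonneg (hfacnn j) _) (fun j _ => hE j)
  have hgnn : ∀ t ∈ Dset n z, (0:ℝ) ≤ (∏ j, t j) ^ (-α - 1) := by
    intro t ht
    exact Real.rpow_nonneg (Finset.prod_nonneg fun i _ =>
      (hc0.trans (hlow t ht i)).le) _
  have hgmeas : Measurable (fun t : Fin n → ℝ => (∏ j, t j) ^ (-α - 1)) := by fun_prop
  have hgint : IntegrableOn (fun t : Fin n → ℝ => (∏ j, t j) ^ (-α - 1)) (Dset n z) := by
    apply Integrable.mono' hGint.integrableOn hgmeas.aestronglyMeasurable.restrict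
    refine (ae_restrict_iff' hD).2 (Filter.Eventually.of_forall fun t ht => ?_)
    rw [Real.norm_eq_abs, abs_of_nonneg (hgnn t ht)]
    exact hgle t ht
  have hstep1 : ∫ t in Dset n z, (∏ j, t j) ^ (-α - 1) ≤ (∫ x, F x) ^ n := by
    calc ∫ t in Dset n z, (∏ j, t j) ^ (-α - 1)
        ≤ ∫ t in Dset n z, ∏ j, F (t j) :=
          setIntegral_mono_on hgint hGint.integrableOn hD hgle
      _ ≤ ∫ t : Fin n → ℝ, ∏ j, F (t j) := setIntegral_le_integral hGint
          (Filter.Eventually.of_forall fun (t : Fin n → ℝ) => Finset.prod_nonneg fun j _ => hFnn (t j))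
      _ = (∫ x, F x) ^ n := hGeq
  -- evaluate ∫ F
  have hI1 : ∫ t in Set.Ioo c 1, t ^ (-γ) = (1 - c ^ (1 - γ)) / (1 - γ) := by
    rw [← integral_Ioc_eq_integral_Ioo, ← intervalIntegral.integral_of_le hc1.le]
    rw [integral_rpow (Or.inr ⟨ne_of_lt (by linarith), Set.notMem_uIcc_of_lt hc0 one_pos⟩)]
    rw [Real.one_rpow]
    have : -γ + 1 = 1 - γ := by ring
    rw [this]
  have hI2 : ∫ t in Set.Ioo c 1, (c + 1 - t) ^ (-γ) = ∫ t in Set.Ioo c 1, t ^ (-γ) := by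
    rw [← integral_Ioc_eq_integral_Ioo, ← intervalIntegral.integral_of_le hc1.le,
      ← integral_Ioc_eq_integral_Ioo, ← intervalIntegral.integral_of_le hc1.le]
    have h := intervalIntegral.integral_comp_sub_left (a := c) (b := 1)
      (fun x : ℝ => x ^ (-γ)) (c + 1)
    simpa using h
  have hFeval : ∫ x, F x = 2 ^ γ * (2 * ((1 - c ^ (1 - γ)) / (1 - γ))) := by
    rw [hFdef, integral_indicator hmeasIoo, hHdef]
    rw [MeasureTheory.integral_const_mul]
    rw [integral_add hint1 hint2, hI2, hI1]
    ring
  have hFbound : ∫ x, F x ≤ K * c ^ (1 - γ) := by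
    rw [hFeval, hKdef]
    have h1γ : γ - 1 > 0 := by linarith
    have hcp : (0:ℝ) ≤ c ^ (1 - γ) := Real.rpow_nonneg hc0.le _
    have heq : (1 - c ^ (1 - γ)) / (1 - γ) = (c ^ (1 - γ) - 1) / (γ - 1) := by
      rw [div_eq_div_iff (by linarith) (by linarith)]; ring
    rw [heq]
    have h2 : (2:ℝ) ^ γ * 2 = 2 ^ (γ + 1) := by
      rw [Real.rpow_add two_pos, Real.rpow_one]
    have h3 : (c ^ (1 - γ) - 1) / (γ - 1) ≤ c ^ (1 - γ) / (γ - 1) := by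
      exact (div_le_div_iff_of_pos_right h1γ).2 (by linarith)
    calc 2 ^ γ * (2 * ((c ^ (1 - γ) - 1) / (γ - 1)))
        = 2 ^ (γ + 1) * ((c ^ (1 - γ) - 1) / (γ - 1)) := by rw [← h2]; ring
      _ ≤ 2 ^ (γ + 1) * (c ^ (1 - γ) / (γ - 1)) :=
          mul_le_mul_of_nonneg_left h3 (Real.rpow_nonneg (by norm_num) _)
      _ = 2 ^ (γ + 1) / (γ - 1) * c ^ (1 - γ) := by ring
  have hFnonneg : 0 ≤ ∫ x, F x := integral_nonneg hFnn
  have hpow : (∫ x, F x) ^ n ≤ (K * c ^ (1 - γ)) ^ n := pow_le_pow_left₀ hFnonneg hFbound n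
  have hcpow : (c ^ (1 - γ)) ^ (n:ℕ) = c ^ (1 - α) := by
    rw [← Real.rpow_natCast (c ^ (1 - γ)) n, ← Real.rpow_mul hc0.le]
    congr 1
    rw [hγdef]
    field_simp
    ring
  have hWeq : W α n z = α ^ n * ∫ t in Dset n z, (∏ j, t j) ^ (-α - 1) := rfl
  rw [hWeq]
  calc α ^ n * ∫ t in Dset n z, (∏ j, t j) ^ (-α - 1)
      ≤ α ^ n * (K * c ^ (1 - γ)) ^ n :=
        mul_le_mul_of_nonneg_left (hstep1.trans hpow) (pow_nonneg hαpos.le n)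
    _ = α ^ n * K ^ n * c ^ (1 - α) := by rw [mul_pow, hcpow]; ring
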